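/- Let x be a 1-form on a finite connected graph G and let m ∈ F(x) be a minimal form. Then the common value β(x) = β_T over all x-minimal spanning trees T satisfies β(x) = (1/2) · #supp m. -/

import Mathlib

open Classical Finset

/-- A (multi)graph given by oriented edges: each oriented edge `e` has a starting
vertex `head e` and an ending vertex `tail e`, and a reversal involution. -/
structure OGraph (V A : Type) where
  head : A → V
  tail : A → V
  rev : A → A
  rev_rev : ∀ e, rev (rev e) = e
  rev_ne : ∀ e, rev e ≠ e
  head_rev : ∀ e, head (rev e) = tail e

namespace OGraph

variable {V A : Type}

/-- `G.IsWalkFrom l u v` : the list of oriented edges `l` is a walk from `u` to `v`. -/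
def IsWalkFrom (G : OGraph V A) : List A → V → V → Prop
  | [], u, v => u = v
  | e :: l, u, v => G.head e = u ∧ G.IsWalkFrom l (G.tail e) v

def Connected (G : OGraph V A) : Prop := ∀ u v : V, ∃ l : List A, G.IsWalkFrom l u v

/-- A (vector-valued) 1-form on the graph. -/
def IsOneForm (G : OGraph V A) {d : ℕ} (b : A → Fin d → ℝ) : Prop :=
  ∀ e, b (G.rev e) = - b e

/-- `G.InF x b` : `b` is a 1-form with the same flux as `x` through every cycle
(equivalently, every closed walk); this is the set `F(x)`. -/
def InF (G : OGraph V A) {d : ℕ} (x b : A → Fin d → ℝ) : Prop :=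
  G.IsOneForm b ∧ ∀ (u : V) (l : List A), G.IsWalkFrom l u u →
    (l.map b).sum = (l.map x).sum

/-- A closed trail: a nonempty closed walk repeating no (unoriented) edge. -/
def IsClosedTrail (G : OGraph V A) (l : List A) (u : V) : Prop :=
  G.IsWalkFrom l u u ∧ l ≠ [] ∧ l.Pairwise (fun e f => e ≠ f ∧ e ≠ G.rev f)

/-- A spanning tree, as a set of oriented edges closed under reversal:
connected, spanning, and acyclic. -/
def IsSpanningTree (G : OGraph V A) (T : Set A) : Prop :=
  (∀ e ∈ T, G.rev e ∈ T) ∧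
  (∀ u v : V, ∃ l : List A, (∀ e ∈ l, e ∈ T) ∧ G.IsWalkFrom l u v) ∧
  ¬ ∃ (l : List A) (u : V), (∀ e ∈ l, e ∈ T) ∧ G.IsClosedTrail l u

/-- `c` is a fundamental cycle of the edge `e ∉ T` with respect to the spanning
tree `T` : a cycle through `e` all of whose other edges lie in `T`. -/
def FundCycle (G : OGraph V A) (T : Set A) (e : A) (c : List A) : Prop :=
  (∃ u, G.IsClosedTrail c u) ∧ e ∈ c ∧ ∀ f ∈ c, f ≠ e → f ∈ T

/-- `S` chooses one orientation of each edge not in `T`. -/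
def IsOrientation (G : OGraph V A) (T S : Set A) : Prop :=
  (∀ e ∈ S, e ∉ T) ∧ ∀ e, e ∉ T → (e ∈ S ↔ G.rev e ∉ S)

/-- The 1-form `m(·,T)` : zero on the tree and equal to the flux of `x` through
the fundamental cycle `c e` on each non-tree edge `e` (oriented via `S`). -/
noncomputable def mForm (G : OGraph V A) {d : ℕ} (x : A → Fin d → ℝ) (S : Set A)
    (c : A → List A) : A → Fin d → ℝ :=
  fun e => if e ∈ S then ((c e).map x).sum
    else if G.rev e ∈ S then - (((c (G.rev e)).map x).sum) else 0

/-- The number of oriented edges in the support of a 1-form. -/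
noncomputable def suppCard [Fintype A] {d : ℕ} (b : A → Fin d → ℝ) : ℕ :=
  (Finset.univ.filter (fun e => b e ≠ 0)).card

/-- Twice the number `β_T` of fundamental cycles of `T` with nonzero `x`-flux
(each non-tree unoriented edge is counted in both orientations). -/
noncomputable def badCount [Fintype A] {d : ℕ} (x : A → Fin d → ℝ) (T : Set A)
    (c : A → List A) : ℕ :=
  (Finset.univ.filter (fun e => e ∉ T ∧ ((c e).map x).sum ≠ 0)).card

/-- An `x`-minimal spanning tree: the number of fundamental cycles with nonzero
`x`-flux is minimal among all spanning trees. -/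
def IsMinTree [Fintype A] (G : OGraph V A) {d : ℕ} (x : A → Fin d → ℝ) (T : Set A) : Prop :=
  G.IsSpanningTree T ∧ ∃ c : A → List A, (∀ e, e ∉ T → G.FundCycle T e (c e)) ∧
    ∀ (T' : Set A) (c' : A → List A), G.IsSpanningTree T' →
      (∀ e, e ∉ T' → G.FundCycle T' e (c' e)) → badCount x T c ≤ badCount x T' c'

end OGraph

namespace OGraph

variable {V A : Type} {d : ℕ}

@[simp] lemma walk_nil (G : OGraph V A) {u v : V} : G.IsWalkFrom [] u v ↔ u = v := Iff.rfl

@[simp] lemma walk_cons (G : OGraph V A) {e : A} {l : List A} {u v : V} :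
    G.IsWalkFrom (e :: l) u v ↔ G.head e = u ∧ G.IsWalkFrom l (G.tail e) v := Iff.rfl

lemma tail_rev (G : OGraph V A) (e : A) : G.tail (G.rev e) = G.head e := by
  have h := G.head_rev (G.rev e); rw [G.rev_rev] at h; exact h.symm

lemma walk_append (G : OGraph V A) {l₁ l₂ : List A} {u w v : V}
    (h₁ : G.IsWalkFrom l₁ u w) (h₂ : G.IsWalkFrom l₂ w v) :
    G.IsWalkFrom (l₁ ++ l₂) u v := by
  induction l₁ generalizing u with
  | nil => rw [G.walk_nil] at h₁; rw [List.nil_append, h₁]; exact h₂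
  | cons e t ih => exact ⟨h₁.1, ih h₁.2⟩

lemma walk_append_split (G : OGraph V A) {l₁ l₂ : List A} {u v : V}
    (h : G.IsWalkFrom (l₁ ++ l₂) u v) :
    ∃ w, G.IsWalkFrom l₁ u w ∧ G.IsWalkFrom l₂ w v := by
  induction l₁ generalizing u with
  | nil => exact ⟨u, rfl, h⟩
  | cons e t ih =>
    obtain ⟨w, hw1, hw2⟩ := ih h.2
    exact ⟨w, ⟨h.1, hw1⟩, hw2⟩

lemma walk_reverse (G : OGraph V A) {l : List A} {u v : V} (h : G.IsWalkFrom l u v) :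
    G.IsWalkFrom (l.reverse.map G.rev) v u := by
  induction l generalizing u with
  | nil => rw [G.walk_nil] at h; subst h; simp
  | cons e t ih =>
    have he : (e :: t).reverse.map G.rev = (t.reverse.map G.rev) ++ [G.rev e] := by simp
    rw [he]
    exact G.walk_append (ih h.2) ⟨G.head_rev e, (G.tail_rev e).trans h.1⟩

lemma sum_walk_reverse (G : OGraph V A) {b : A → Fin d → ℝ} (hb : G.IsOneForm b)
    (l : List A) : ((l.reverse.map G.rev).map b).sum = - (l.map b).sum := by
  induction l with
  | nil => simp
  | cons e t ih =>
    simp only [List.reverse_cons, List.map_append, List.sum_append, List.map_cons,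
      List.map_nil, List.sum_cons, List.sum_nil, ih, hb e]
    abel

lemma not_pairwise_decomp {α : Type*} {P : α → α → Prop} :
    ∀ {l : List α}, ¬ l.Pairwise P →
      ∃ l₁ a l₂ b l₃, l = l₁ ++ a :: (l₂ ++ b :: l₃) ∧ ¬ P a b := by
  intro l
  induction l with
  | nil => intro h; exact absurd List.Pairwise.nil h
  | cons x t ih =>
    intro h
    by_cases hx : ∀ y ∈ t, P x y
    · have ht : ¬ t.Pairwise P := fun hp => h (List.pairwise_cons.mpr ⟨hx, hp⟩)
      obtain ⟨l₁, a, l₂, b, l₃, rfl, hab⟩ := ih ht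
      exact ⟨x :: l₁, a, l₂, b, l₃, rfl, hab⟩
    · push_neg at hx
      obtain ⟨y, hy, hxy⟩ := hx
      obtain ⟨s, t', rfl⟩ := List.append_of_mem hy
      exact ⟨[], x, s, y, t', rfl, hxy⟩

/-- Acyclicity, phrased as in `IsSpanningTree`. -/
def NoCyc (G : OGraph V A) (T : Set A) : Prop :=
  ¬ ∃ (l : List A) (u : V), (∀ e ∈ l, e ∈ T) ∧ G.IsClosedTrail l u

/-- A closed walk in an acyclic (rev-closed) edge set has zero flux for any 1-form. -/
lemma tree_sum_zero_aux (G : OGraph V A) {T : Set A} (hrev : ∀ e ∈ T, G.rev e ∈ T)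
    (hacyc : G.NoCyc T) {b : A → Fin d → ℝ} (hb : G.IsOneForm b) :
    ∀ (n : ℕ) (l : List A), l.length ≤ n → (∀ e ∈ l, e ∈ T) →
      ∀ u, G.IsWalkFrom l u u → (l.map b).sum = 0 := by
  intro n
  induction n with
  | zero =>
    intro l hl _ u _
    rw [List.length_eq_zero_iff.mp (Nat.le_zero.mp hl)]; simp
  | succ n ih =>
    intro l hl hT u hw
    rcases eq_or_ne l [] with rfl | hne
    · simp
    by_cases hp : l.Pairwise (fun e f => e ≠ f ∧ e ≠ G.rev f)
    · exact absurd ⟨l, u, hT, hw, hne, hp⟩ hacyc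
    obtain ⟨l₁, e, l₂, f, l₃, rfl, hef⟩ := not_pairwise_decomp hp
    obtain ⟨a, h1, h2⟩ := G.walk_append_split hw
    obtain ⟨h2a, h2b⟩ := G.walk_cons.mp h2
    obtain ⟨w2, h3, h4⟩ := G.walk_append_split h2b
    obtain ⟨h4a, h4b⟩ := G.walk_cons.mp h4
    have hlen : l₁.length + (l₂.length + (l₃.length + 2)) ≤ n + 1 := by
      have hl0 := hl; simp [List.length_append] at hl0; omega
    have hmemT : ∀ (s : List A), (∀ e' ∈ s, e' ∈ (l₁ ++ e :: (l₂ ++ f :: l₃))) →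
        ∀ e' ∈ s, e' ∈ T := fun s hs e' he' => hT _ (hs e' he')
    rcases not_and_or.mp hef with hef | hef
    · -- e = f
      rw [not_ne_iff] at hef; subst hef
      -- w₁ = l₁ ++ e :: l₃ closed at u, w₂ = e :: l₂ closed at a
      have hba : w2 = a := h4a.symm.trans h2a
      rw [hba] at h3
      have hw1 : G.IsWalkFrom (l₁ ++ e :: l₃) u u :=
        G.walk_append h1 ⟨h2a, h4b⟩
      have hw2 : G.IsWalkFrom (e :: l₂) a a := ⟨h2a, h3⟩
      have s1 : ((l₁ ++ e :: l₃).map b).sum = 0 := by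
        refine ih _ (by simp [List.length_append]; omega) ?_ u hw1
        intro e' he'; refine hT e' ?_; simp at he' ⊢; tauto
      have s2 : (((e :: l₂)).map b).sum = 0 := by
        refine ih _ (by simp; omega) ?_ a hw2
        intro e' he'; refine hT e' ?_; simp at he' ⊢; tauto
      have expand : ((l₁ ++ e :: (l₂ ++ e :: l₃)).map b).sum =
          ((l₁ ++ e :: l₃).map b).sum + ((e :: l₂).map b).sum := by
        simp only [List.map_append, List.sum_append, List.map_cons, List.sum_cons]
        abel
      rw [expand, s1, s2, add_zero]
    · -- e = rev f
      rw [not_ne_iff] at hef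
      -- positions: l₁ : u → a, a = head e; e : a → tail e; l₂ : tail e → w2,
      -- w2 = head f; f : w2 → tail f; l₃ : tail f → u
      -- with e = rev f : head e = tail f, tail e = head f
      have hhe : G.head e = G.tail f := by rw [hef, G.head_rev]
      have hte : G.tail e = G.head f := by rw [hef, G.tail_rev]
      have hw2' : w2 = G.tail e := hte ▸ h4a.symm
      subst hw2'
      have hw1 : G.IsWalkFrom (l₁ ++ l₃) u u := by
        refine G.walk_append h1 ?_
        rw [← h2a, hhe]; exact h4b
      have hwl2 : G.IsWalkFrom l₂ (G.tail e) (G.tail e) := h3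
      have s1 : ((l₁ ++ l₃).map b).sum = 0 := by
        refine ih _ (by simp [List.length_append]; omega) ?_ u hw1
        intro e' he'; refine hT e' ?_; simp at he' ⊢; tauto
      have s2 : (l₂.map b).sum = 0 := by
        refine ih _ (by omega) ?_ (G.tail e) hwl2
        intro e' he'; refine hT e' ?_; simp [he']
      have hbef : b e + b f = 0 := by
        rw [hef, hb f]; abel
      have expand : ((l₁ ++ e :: (l₂ ++ f :: l₃)).map b).sum =
          ((l₁ ++ l₃).map b).sum + (l₂.map b).sum + (b e + b f) := by
        simp only [List.map_append, List.sum_append, List.map_cons, List.sum_cons]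
        abel
      rw [expand, s1, s2, hbef]; simp

lemma tree_sum_zero (G : OGraph V A) {T : Set A} (hrev : ∀ e ∈ T, G.rev e ∈ T)
    (hacyc : G.NoCyc T) {b : A → Fin d → ℝ} (hb : G.IsOneForm b)
    {l : List A} (hT : ∀ e ∈ l, e ∈ T) {u : V} (hw : G.IsWalkFrom l u u) :
    (l.map b).sum = 0 :=
  G.tree_sum_zero_aux hrev hacyc hb l.length l le_rfl hT u hw

/-- Rotating a closed trail at an edge `e` it contains: the rest is a walk
`tail e → head e` avoiding `e` and `rev e`, and sums decompose. -/
lemma trail_rotate (G : OGraph V A) {l : List A} {u : V} (h : G.IsClosedTrail l u) {e : A}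
    (he : e ∈ l) :
    ∃ w : List A, G.IsWalkFrom w (G.tail e) (G.head e) ∧
      (∀ f ∈ w, f ∈ l ∧ f ≠ e ∧ f ≠ G.rev e) ∧
      ∀ (d' : ℕ) (y : A → Fin d' → ℝ), (l.map y).sum = y e + (w.map y).sum := by
  obtain ⟨p, q, rfl⟩ := List.append_of_mem he
  obtain ⟨hw, hne, hp⟩ := h
  obtain ⟨a, h1, h2⟩ := G.walk_append_split hw
  obtain ⟨h2a, h2b⟩ := G.walk_cons.mp h2
  rw [List.pairwise_append] at hp
  obtain ⟨hpp, hpq, hppq⟩ := hp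
  rw [List.pairwise_cons] at hpq
  refine ⟨q ++ p, G.walk_append h2b (h2a ▸ h1), ?_, ?_⟩
  · intro f hf
    rcases List.mem_append.mp hf with hf | hf
    · obtain ⟨hf1, hf2⟩ := hpq.1 f hf
      refine ⟨by simp [hf], hf1.symm, fun hfe => hf2 ?_⟩
      rw [hfe, G.rev_rev]
    · obtain ⟨hf1, hf2⟩ := hppq f hf e (by simp)
      exact ⟨by simp [hf], hf1, hf2⟩
  · intro d' y
    simp only [List.map_append, List.sum_append, List.map_cons, List.sum_cons]
    abel

/-- Any walk contains a trail (pairwise-distinct walk) with the same endpoints,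
with edges among those of the walk. -/
lemma exists_trail (G : OGraph V A) :
    ∀ (n : ℕ) (l : List A), l.length ≤ n → ∀ (u v : V), G.IsWalkFrom l u v →
    ∃ w : List A, (∀ e ∈ w, e ∈ l) ∧ G.IsWalkFrom w u v ∧
      w.Pairwise (fun e f => e ≠ f ∧ e ≠ G.rev f) := by
  intro n
  induction n with
  | zero =>
    intro l hl u v hw
    rw [List.length_eq_zero_iff.mp (Nat.le_zero.mp hl)] at hw ⊢
    exact ⟨[], by simp, hw, List.Pairwise.nil⟩
  | succ n ih =>
    intro l hl u v hw
    by_cases hp : l.Pairwise (fun e f => e ≠ f ∧ e ≠ G.rev f)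
    · exact ⟨l, fun e he => he, hw, hp⟩
    obtain ⟨l₁, e, l₂, f, l₃, rfl, hef⟩ := not_pairwise_decomp hp
    obtain ⟨a, h1, h2⟩ := G.walk_append_split hw
    obtain ⟨h2a, h2b⟩ := G.walk_cons.mp h2
    obtain ⟨w2, h3, h4⟩ := G.walk_append_split h2b
    obtain ⟨h4a, h4b⟩ := G.walk_cons.mp h4
    have hlen : l₁.length + (l₂.length + (l₃.length + 2)) ≤ n + 1 := by
      have hl0 := hl; simp [List.length_append] at hl0; omega
    rcases not_and_or.mp hef with hef | hef
    · rw [not_ne_iff] at hef; subst hef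
      have hba : w2 = a := h4a.symm.trans h2a
      have hw' : G.IsWalkFrom (l₁ ++ e :: l₃) u v :=
        G.walk_append h1 ⟨h2a, h4b⟩
      obtain ⟨w, hsub, hww, hwp⟩ := ih (l₁ ++ e :: l₃)
        (by simp [List.length_append]; omega) u v hw'
      refine ⟨w, ?_, hww, hwp⟩
      intro e' he'
      have := hsub e' he'; simp at this ⊢; tauto
    · rw [not_ne_iff] at hef
      have hhe : G.head e = G.tail f := by rw [hef, G.head_rev]
      have hw' : G.IsWalkFrom (l₁ ++ l₃) u v := by
        refine G.walk_append h1 ?_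
        rw [← h2a, hhe]; exact h4b
      obtain ⟨w, hsub, hww, hwp⟩ := ih (l₁ ++ l₃)
        (by simp [List.length_append]; omega) u v hw'
      refine ⟨w, ?_, hww, hwp⟩
      intro e' he'
      have := hsub e' he'; simp at this ⊢; tauto

/-- Connectivity within an edge set. -/
def Conn (G : OGraph V A) (E : Set A) (u v : V) : Prop :=
  ∃ l : List A, (∀ e ∈ l, e ∈ E) ∧ G.IsWalkFrom l u v

lemma conn_refl (G : OGraph V A) (E : Set A) (u : V) : G.Conn E u u :=
  ⟨[], by simp, rfl⟩

lemma conn_symm (G : OGraph V A) {E : Set A} (hrev : ∀ e ∈ E, G.rev e ∈ E) {u v : V}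
    (h : G.Conn E u v) : G.Conn E v u := by
  obtain ⟨l, hl, hw⟩ := h
  refine ⟨l.reverse.map G.rev, ?_, G.walk_reverse hw⟩
  intro e he
  simp only [List.mem_map, List.mem_reverse] at he
  obtain ⟨f, hf, rfl⟩ := he
  exact hrev f (hl f hf)

lemma conn_trans (G : OGraph V A) {E : Set A} {u v w : V}
    (h1 : G.Conn E u v) (h2 : G.Conn E v w) : G.Conn E u w := by
  obtain ⟨l1, hl1, hw1⟩ := h1
  obtain ⟨l2, hl2, hw2⟩ := h2
  refine ⟨l1 ++ l2, ?_, G.walk_append hw1 hw2⟩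
  intro e he
  rcases List.mem_append.mp he with he | he
  exacts [hl1 e he, hl2 e he]

/-- Adding an edge (and its reversal) joining two different components keeps acyclicity. -/
lemma nocyc_extend (G : OGraph V A) {E : Set A} (hrev : ∀ e ∈ E, G.rev e ∈ E)
    (hacyc : G.NoCyc E) {e : A} (hconn : ¬ G.Conn E (G.head e) (G.tail e)) :
    G.NoCyc (E ∪ {e, G.rev e}) := by
  rintro ⟨l, u, hl, hct⟩
  by_cases hall : ∀ f ∈ l, f ∈ E
  · exact hacyc ⟨l, u, hall, hct⟩
  push_neg at hall
  obtain ⟨f, hfl, hfE⟩ := hall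
  have hf : f = e ∨ f = G.rev e := by
    have := hl f hfl
    simp only [Set.mem_union, Set.mem_insert_iff, Set.mem_singleton_iff] at this
    tauto
  obtain ⟨w, hww, hwmem, -⟩ := G.trail_rotate hct hfl
  have hwE : ∀ g ∈ w, g ∈ E := by
    intro g hg
    obtain ⟨hg1, hg2, hg3⟩ := hwmem g hg
    have := hl g hg1
    simp only [Set.mem_union, Set.mem_insert_iff, Set.mem_singleton_iff] at this
    rcases this with h | h | h
    · exact h
    · rcases hf with rfl | rfl
      · exact absurd h hg2
      · exact absurd (by rw [h, G.rev_rev]) hg3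
    · rcases hf with rfl | rfl
      · exact absurd h hg3
      · exact absurd h hg2
  have hcw : G.Conn E (G.tail f) (G.head f) := ⟨w, hwE, hww⟩
  rcases hf with rfl | rfl
  · exact hconn (G.conn_symm hrev hcw)
  · rw [G.tail_rev, G.head_rev] at hcw
    exact hconn hcw

/-- Flux of a 1-form through a fundamental cycle of `rev e` is minus that through
a fundamental cycle of `e`. -/
lemma fund_flux_rev (G : OGraph V A) {T : Set A} (hrev : ∀ e ∈ T, G.rev e ∈ T)
    (hacyc : G.NoCyc T) {y : A → Fin d → ℝ} (hy : G.IsOneForm y) {e : A}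
    {ce cre : List A} (h1 : G.FundCycle T e ce) (h2 : G.FundCycle T (G.rev e) cre) :
    (cre.map y).sum = - (ce.map y).sum := by
  obtain ⟨⟨u1, hct1⟩, he1, hT1⟩ := h1
  obtain ⟨⟨u2, hct2⟩, he2, hT2⟩ := h2
  obtain ⟨w1, hww1, hwm1, hsum1⟩ := G.trail_rotate hct1 he1
  obtain ⟨w2, hww2, hwm2, hsum2⟩ := G.trail_rotate hct2 he2
  rw [G.tail_rev, G.head_rev] at hww2
  have hw1T : ∀ f ∈ w1, f ∈ T := fun f hf => hT1 f (hwm1 f hf).1 (hwm1 f hf).2.1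
  have hw2T : ∀ f ∈ w2, f ∈ T := fun f hf => hT2 f (hwm2 f hf).1 (hwm2 f hf).2.1
  have hclosed : G.IsWalkFrom (w2 ++ w1) (G.head e) (G.head e) :=
    G.walk_append hww2 hww1
  have hz : ((w2 ++ w1).map y).sum = 0 := by
    refine G.tree_sum_zero hrev hacyc hy ?_ hclosed
    intro f hf
    rcases List.mem_append.mp hf with hf | hf
    exacts [hw2T f hf, hw1T f hf]
  rw [List.map_append, List.sum_append] at hz
  rw [hsum1 d y, hsum2 d y, hy e]
  rw [eq_neg_of_add_eq_zero_left hz]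
  abel

/-- Flux through a fundamental cycle is independent of the choice of cycle. -/
lemma fund_flux_unique (G : OGraph V A) {T : Set A} (hrev : ∀ e ∈ T, G.rev e ∈ T)
    (hacyc : G.NoCyc T) {y : A → Fin d → ℝ} (hy : G.IsOneForm y) {e : A}
    {c1 c2 : List A} (h1 : G.FundCycle T e c1) (h2 : G.FundCycle T e c2) :
    (c1.map y).sum = (c2.map y).sum := by
  obtain ⟨⟨u1, hct1⟩, he1, hT1⟩ := h1
  obtain ⟨⟨u2, hct2⟩, he2, hT2⟩ := h2
  obtain ⟨w1, hww1, hwm1, hsum1⟩ := G.trail_rotate hct1 he1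
  obtain ⟨w2, hww2, hwm2, hsum2⟩ := G.trail_rotate hct2 he2
  have hw1T : ∀ f ∈ w1, f ∈ T := fun f hf => hT1 f (hwm1 f hf).1 (hwm1 f hf).2.1
  have hw2T : ∀ f ∈ w2, f ∈ T := fun f hf => hT2 f (hwm2 f hf).1 (hwm2 f hf).2.1
  have hclosed : G.IsWalkFrom ((w2.reverse.map G.rev) ++ w1) (G.head e) (G.head e) :=
    G.walk_append (G.walk_reverse hww2) hww1
  have hz : (((w2.reverse.map G.rev) ++ w1).map y).sum = 0 := by
    refine G.tree_sum_zero hrev hacyc hy ?_ hclosed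
    intro f hf
    rcases List.mem_append.mp hf with hf | hf
    · simp only [List.mem_map, List.mem_reverse] at hf
      obtain ⟨g, hg, rfl⟩ := hf
      exact hrev g (hw2T g hg)
    · exact hw1T f hf
  rw [List.map_append, List.sum_append, G.sum_walk_reverse hy] at hz
  rw [hsum1 d y, hsum2 d y]
  have hs : (w1.map y).sum = (w2.map y).sum := by
    have h : (w1.map y).sum - (w2.map y).sum = 0 := by
      rw [sub_eq_add_neg, add_comm]; exact hz
    exact sub_eq_zero.mp h
  rw [hs]
lemma sum_map_sub {α : Type*} (l : List α) (f g : α → Fin d → ℝ) :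
    (l.map (fun e => f e - g e)).sum = (l.map f).sum - (l.map g).sum := by
  induction l with
  | nil => simp
  | cons a t ih => simp only [List.map_cons, List.sum_cons, ih]; abel

lemma fundcycle_of_walk (G : OGraph V A) {T : Set A} (hrev : ∀ f ∈ T, G.rev f ∈ T)
    {e : A} (he : e ∉ T) {E : Set A} (hE : E ⊆ T)
    {l : List A} (hl : ∀ f ∈ l, f ∈ E) (hw : G.IsWalkFrom l (G.tail e) (G.head e)) :
    ∃ cyc, G.FundCycle T e cyc ∧ ∀ f ∈ cyc, f = e ∨ f ∈ E := by
  obtain ⟨w, hsub, hww, hpw⟩ := G.exists_trail l.length l le_rfl _ _ hw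
  have hwE : ∀ f ∈ w, f ∈ E := fun f hf => hl f (hsub f hf)
  have hpair : ∀ f ∈ w, e ≠ f ∧ e ≠ G.rev f := by
    intro f hf
    have hfT : f ∈ T := hE (hwE f hf)
    have hrfT : G.rev f ∈ T := hrev f hfT
    exact ⟨fun h => he (h ▸ hfT), fun h => he (h ▸ hrfT)⟩
  refine ⟨e :: w, ⟨⟨G.head e, ⟨rfl, hww⟩, List.cons_ne_nil _ _,
    List.pairwise_cons.mpr ⟨hpair, hpw⟩⟩, List.mem_cons_self, ?_⟩, ?_⟩
  · intro f hf hfe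
    rcases List.mem_cons.mp hf with rfl | hf
    · exact absurd rfl hfe
    · exact hE (hwE f hf)
  · intro f hf
    rcases List.mem_cons.mp hf with rfl | hf
    · exact Or.inl rfl
    · exact Or.inr (hwE f hf)

/-- If a 1-form has zero flux through every fundamental cycle of a spanning tree,
it has zero flux through every closed walk. -/
lemma flux_zero_of_cycles (G : OGraph V A) {T : Set A} (hrev : ∀ e ∈ T, G.rev e ∈ T)
    (hacyc : G.NoCyc T) {y : A → Fin d → ℝ} (hy : G.IsOneForm y)
    {c : A → List A} (hc : ∀ e, e ∉ T → G.FundCycle T e (c e))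
    (hflux : ∀ e, e ∉ T → ((c e).map y).sum = 0) :
    ∀ (n : ℕ) (l : List A), l.countP (fun e => decide (e ∉ T)) ≤ n →
      ∀ u, G.IsWalkFrom l u u → (l.map y).sum = 0 := by
  intro n
  induction n with
  | zero =>
    intro l hl u hw
    refine G.tree_sum_zero hrev hacyc hy ?_ hw
    intro e he
    by_contra heT
    have hpos : 0 < l.countP (fun e => decide (e ∉ T)) :=
      List.countP_pos_iff.mpr ⟨e, he, by simp [heT]⟩
    omega
  | succ n ih =>
    intro l hl u hw
    by_cases hall : ∀ e ∈ l, e ∈ T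
    · exact G.tree_sum_zero hrev hacyc hy hall hw
    push_neg at hall
    obtain ⟨e, hel, heT⟩ := hall
    obtain ⟨l₁, l₂, rfl⟩ := List.append_of_mem hel
    obtain ⟨a, h1, h2⟩ := G.walk_append_split hw
    obtain ⟨h2a, h2b⟩ := G.walk_cons.mp h2
    obtain ⟨⟨u0, hct⟩, hec, hcT⟩ := hc e heT
    obtain ⟨w, hww, hwm, hsum⟩ := G.trail_rotate hct hec
    have hwT : ∀ f ∈ w, f ∈ T := fun f hf => hcT f (hwm f hf).1 (hwm f hf).2.1
    have hwsum : (w.map y).sum = - y e := by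
      have h0 := hflux e heT
      rw [hsum d y] at h0
      exact eq_neg_of_add_eq_zero_right h0
    have hrwT : ∀ f ∈ w.reverse.map G.rev, f ∈ T := by
      intro f hf
      simp only [List.mem_map, List.mem_reverse] at hf
      obtain ⟨g, hg, rfl⟩ := hf
      exact hrev g (hwT g hg)
    have hrww : G.IsWalkFrom (w.reverse.map G.rev) (G.head e) (G.tail e) :=
      G.walk_reverse hww
    have hrwsum : ((w.reverse.map G.rev).map y).sum = y e := by
      rw [G.sum_walk_reverse hy, hwsum, neg_neg]
    have hw' : G.IsWalkFrom (l₁ ++ ((w.reverse.map G.rev) ++ l₂)) u u :=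
      G.walk_append h1 (G.walk_append (h2a ▸ hrww) h2b)
    have hcount : (l₁ ++ ((w.reverse.map G.rev) ++ l₂)).countP
        (fun e => decide (e ∉ T)) ≤ n := by
      have hc0 : (w.reverse.map G.rev).countP (fun e => decide (e ∉ T)) = 0 := by
        rw [List.countP_eq_zero]
        intro f hf
        simpa using hrwT f hf
      have hl' := hl
      simp only [List.countP_append, List.countP_cons] at hl' ⊢
      rw [hc0]
      simp only [heT, not_false_eq_true, decide_true, if_true] at hl'
      omega
    have hs := ih _ hcount u hw'
    have expand : ((l₁ ++ e :: l₂).map y).sum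
        = ((l₁ ++ ((w.reverse.map G.rev) ++ l₂)).map y).sum
          - ((w.reverse.map G.rev).map y).sum + y e := by
      simp only [List.map_append, List.sum_append, List.map_cons, List.sum_cons]
      abel
    rw [expand, hs, hrwsum]
    abel

/-- Key properties of `mForm`. -/
lemma mform_works (G : OGraph V A) {T : Set A} (hrev : ∀ e ∈ T, G.rev e ∈ T)
    (hacyc : G.NoCyc T) {x : A → Fin d → ℝ} (hx : G.IsOneForm x)
    {c : A → List A} (hc : ∀ e, e ∉ T → G.FundCycle T e (c e))
    {S : Set A} (hS1 : ∀ e ∈ S, e ∉ T) (hS2 : ∀ e, e ∉ T → (e ∈ S ↔ G.rev e ∉ S)) :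
    (∀ e, e ∈ T → G.mForm x S c e = 0) ∧
    (∀ e, e ∉ T → G.mForm x S c e = ((c e).map x).sum) ∧
    G.IsOneForm (G.mForm x S c) := by
  have hrevnot : ∀ e, e ∉ T → G.rev e ∉ T := by
    intro e heT hrT
    exact heT (by rw [← G.rev_rev e]; exact hrev _ hrT)
  have hzero : ∀ e, e ∈ T → G.mForm x S c e = 0 := by
    intro e heT
    have h1 : e ∉ S := fun h => hS1 e h heT
    have h2 : G.rev e ∉ S := fun h => hS1 _ h (hrev e heT)
    simp [mForm, h1, h2]
  have hval : ∀ e, e ∉ T → G.mForm x S c e = ((c e).map x).sum := by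
    intro e heT
    by_cases heS : e ∈ S
    · simp [mForm, heS]
    · have hrS : G.rev e ∈ S := not_not.mp (fun h => heS ((hS2 e heT).mpr h))
      have hfr := G.fund_flux_rev hrev hacyc hx (hc e heT) (hc (G.rev e) (hrevnot e heT))
      simp [mForm, heS, hrS, hfr]
  refine ⟨hzero, hval, ?_⟩
  intro e
  by_cases heT : e ∈ T
  · rw [hzero e heT, hzero _ (hrev e heT), neg_zero]
  · rw [hval e heT, hval _ (hrevnot e heT)]
    exact G.fund_flux_rev hrev hacyc hx (hc e heT) (hc (G.rev e) (hrevnot e heT))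

lemma mform_inF (G : OGraph V A) {T : Set A} (hrev : ∀ e ∈ T, G.rev e ∈ T)
    (hacyc : G.NoCyc T) {x : A → Fin d → ℝ} (hx : G.IsOneForm x)
    {c : A → List A} (hc : ∀ e, e ∉ T → G.FundCycle T e (c e))
    {S : Set A} (hS1 : ∀ e ∈ S, e ∉ T) (hS2 : ∀ e, e ∉ T → (e ∈ S ↔ G.rev e ∉ S)) :
    G.InF x (G.mForm x S c) := by
  obtain ⟨h2, h3, h1⟩ := G.mform_works hrev hacyc hx hc hS1 hS2
  refine ⟨h1, ?_⟩
  intro u l hw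
  have hy : G.IsOneForm (fun e => x e - G.mForm x S c e) := by
    intro e
    show x (G.rev e) - G.mForm x S c (G.rev e) = -(x e - G.mForm x S c e)
    rw [hx e, h1 e]; abel
  have hflux : ∀ e, e ∉ T → ((c e).map (fun e => x e - G.mForm x S c e)).sum = 0 := by
    intro e heT
    obtain ⟨⟨u0, hct⟩, hec, hcT⟩ := hc e heT
    obtain ⟨w, hww, hwm, hsum⟩ := G.trail_rotate hct hec
    rw [sum_map_sub, hsum d x, hsum d (G.mForm x S c)]
    have hw0 : (w.map (G.mForm x S c)).sum = 0 := by
      apply List.sum_eq_zero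
      intro z hz
      rw [List.mem_map] at hz
      obtain ⟨f, hf, rfl⟩ := hz
      exact h2 f (hcT f (hwm f hf).1 (hwm f hf).2.1)
    rw [hw0, h3 e heT, hsum d x]
    abel
  have hz := G.flux_zero_of_cycles hrev hacyc hy hc hflux
    (l.countP (fun e => decide (e ∉ T))) l le_rfl u hw
  rw [sum_map_sub] at hz
  exact (sub_eq_zero.mp hz).symm

lemma mform_supp [Fintype A] (G : OGraph V A) {T : Set A} (hrev : ∀ e ∈ T, G.rev e ∈ T)
    (hacyc : G.NoCyc T) {x : A → Fin d → ℝ} (hx : G.IsOneForm x)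
    {c : A → List A} (hc : ∀ e, e ∉ T → G.FundCycle T e (c e))
    {S : Set A} (hS1 : ∀ e ∈ S, e ∉ T) (hS2 : ∀ e, e ∉ T → (e ∈ S ↔ G.rev e ∉ S)) :
    suppCard (G.mForm x S c) = badCount x T c := by
  obtain ⟨h2, h3, h1⟩ := G.mform_works hrev hacyc hx hc hS1 hS2
  unfold suppCard badCount
  congr 1
  ext e
  by_cases heT : e ∈ T
  · simp [h2 e heT, heT]
  · simp [h3 e heT, heT]

lemma nocyc_mono (G : OGraph V A) {E E' : Set A} (hsub : E ⊆ E') (h : G.NoCyc E') :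
    G.NoCyc E := by
  rintro ⟨l, u, hl, hct⟩
  exact h ⟨l, u, fun e he => hsub (hl e he), hct⟩

lemma conn_of_all_edges (G : OGraph V A) {E : Set A}
    (hE : ∀ e : A, G.Conn E (G.head e) (G.tail e)) :
    ∀ (l : List A) (u v : V), G.IsWalkFrom l u v → G.Conn E u v := by
  intro l
  induction l with
  | nil =>
    intro u v h; rw [G.walk_nil] at h; subst h; exact G.conn_refl E u
  | cons e t ih =>
    intro u v h
    exact G.conn_trans (h.1 ▸ hE e) (ih _ _ h.2)

/-- There is a spanning tree whose edge set prefers the rev-closed edge set `D`: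
any `D`-edge not in the tree has its endpoints joined inside the tree by
`D`-edges only. -/
lemma exists_good_tree [Fintype A] (G : OGraph V A) (hG : G.Connected)
    {D : Set A} (hD : ∀ e ∈ D, G.rev e ∈ D) :
    ∃ T' : Set A, G.IsSpanningTree T' ∧
      ∀ e, e ∈ D → e ∉ T' →
        ∃ l, (∀ f ∈ l, f ∈ T' ∧ f ∈ D) ∧ G.IsWalkFrom l (G.tail e) (G.head e) := by
  classical
  let P1 : Finset A → Prop := fun F => (∀ e ∈ F, e ∈ D) ∧ (∀ e ∈ F, G.rev e ∈ F) ∧ G.NoCyc ↑F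
  have hnocycempty : G.NoCyc (↑(∅ : Finset A)) := by
    rintro ⟨l, u, hl, hw, hne, hp⟩
    rcases l with _ | ⟨e, t⟩
    · exact hne rfl
    · simpa using hl e (by simp)
  have hempty : P1 ∅ := ⟨by simp, by simp, hnocycempty⟩
  obtain ⟨F₀, hF₀mem, hF₀max⟩ := Finset.exists_maximal
    (s := (Finset.univ : Finset (Finset A)).filter P1)
    ⟨∅, Finset.mem_filter.mpr ⟨Finset.mem_univ _, hempty⟩⟩
  rw [Finset.mem_filter] at hF₀mem
  obtain ⟨-, hF₀D, hF₀rev, hF₀acyc⟩ := hF₀mem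
  have hF₀revS : ∀ f ∈ (↑F₀ : Set A), G.rev f ∈ (↑F₀ : Set A) := by
    intro f hf; simpa using hF₀rev f (by simpa using hf)
  -- generic maximality-extension argument
  have hext : ∀ (F : Finset A) (e : A), (∀ f ∈ F, G.rev f ∈ F) → G.NoCyc ↑F →
      ¬ G.Conn ↑F (G.head e) (G.tail e) →
      (∀ f ∈ (insert e (insert (G.rev e) F) : Finset A), G.rev f ∈
        (insert e (insert (G.rev e) F) : Finset A)) ∧
      G.NoCyc ↑(insert e (insert (G.rev e) F) : Finset A) ∧ e ∉ F := by
    intro F e hFrev hFacyc hnc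
    have hFrevS : ∀ f ∈ (↑F : Set A), G.rev f ∈ (↑F : Set A) := by
      intro f hf; simpa using hFrev f (by simpa using hf)
    have heF : e ∉ F := by
      intro he
      apply hnc
      refine ⟨[e], ?_, rfl, rfl⟩
      intro f hf
      rw [List.mem_singleton] at hf
      subst hf
      simpa using he
    have hcoe : (↑(insert e (insert (G.rev e) F) : Finset A) : Set A)
        = ↑F ∪ {e, G.rev e} := by
      ext f
      simp only [Finset.coe_insert, Set.mem_insert_iff, Finset.mem_coe, Set.mem_union,
        Set.mem_singleton_iff]
      tauto
    refine ⟨?_, ?_, heF⟩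
    · intro f hf
      simp only [Finset.mem_insert] at hf ⊢
      rcases hf with rfl | rfl | hf
      · tauto
      · rw [G.rev_rev]; tauto
      · exact Or.inr (Or.inr (hFrev f hf))
    · rw [hcoe]
      exact G.nocyc_extend hFrevS hFacyc hnc
  have hconn1 : ∀ e ∈ D, G.Conn ↑F₀ (G.head e) (G.tail e) := by
    intro e heD
    by_contra hnc
    obtain ⟨hrev', hacyc', heF⟩ := hext F₀ e hF₀rev hF₀acyc hnc
    have hP1' : P1 (insert e (insert (G.rev e) F₀)) := by
      refine ⟨?_, hrev', hacyc'⟩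
      intro f hf
      simp only [Finset.mem_insert] at hf
      rcases hf with rfl | rfl | hf
      · exact heD
      · exact hD e heD
      · exact hF₀D f hf
    have hsub : F₀ ⊆ insert e (insert (G.rev e) F₀) := by intro f hf; simp [hf]
    exact heF (Finset.le_iff_subset.mp
      (hF₀max (Finset.mem_filter.mpr ⟨Finset.mem_univ _, hP1'⟩) hsub) (by simp))
  -- stage 2
  let P2 : Finset A → Prop := fun F => F₀ ⊆ F ∧ (∀ e ∈ F, G.rev e ∈ F) ∧ G.NoCyc ↑F
  have hP2F₀ : P2 F₀ := ⟨Finset.Subset.refl _, hF₀rev, hF₀acyc⟩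
  obtain ⟨T₀, hT₀mem, hT₀max⟩ := Finset.exists_maximal
    (s := (Finset.univ : Finset (Finset A)).filter P2)
    ⟨F₀, Finset.mem_filter.mpr ⟨Finset.mem_univ _, hP2F₀⟩⟩
  rw [Finset.mem_filter] at hT₀mem
  obtain ⟨-, hT₀F₀, hT₀rev, hT₀acyc⟩ := hT₀mem
  have hT₀revS : ∀ f ∈ (↑T₀ : Set A), G.rev f ∈ (↑T₀ : Set A) := by
    intro f hf; simpa using hT₀rev f (by simpa using hf)
  have hconn2 : ∀ e : A, G.Conn ↑T₀ (G.head e) (G.tail e) := by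
    intro e
    by_contra hnc
    obtain ⟨hrev', hacyc', heF⟩ := hext T₀ e hT₀rev hT₀acyc hnc
    have hP2' : P2 (insert e (insert (G.rev e) T₀)) := by
      refine ⟨?_, hrev', hacyc'⟩
      intro f hf
      simp only [Finset.mem_insert]
      exact Or.inr (Or.inr (hT₀F₀ hf))
    have hsub : T₀ ⊆ insert e (insert (G.rev e) T₀) := by intro f hf; simp [hf]
    exact heF (Finset.le_iff_subset.mp
      (hT₀max (Finset.mem_filter.mpr ⟨Finset.mem_univ _, hP2'⟩) hsub) (by simp))
  have hspan : ∀ u v : V, G.Conn ↑T₀ u v := by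
    intro u v
    obtain ⟨l, hw⟩ := hG u v
    exact G.conn_of_all_edges hconn2 l u v hw
  refine ⟨↑T₀, ⟨hT₀revS, hspan, hT₀acyc⟩, ?_⟩
  intro e heD heT
  have hc1 := G.conn_symm hF₀revS (hconn1 e heD)
  obtain ⟨l, hl, hw⟩ := hc1
  refine ⟨l, ?_, hw⟩
  intro f hf
  have hfF₀ : f ∈ F₀ := by simpa using hl f hf
  exact ⟨by simpa using hT₀F₀ hfF₀, hF₀D f hfF₀⟩


end OGraph

/-- Let `x` be a 1-form on a finite connected graph `G` and let
`m ∈ F(x)` be a minimal form. Then the common value `β(x) = β_T` over all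
`x`-minimal spanning trees `T` satisfies `β(x) = (1/2)·#supp m`. Here
`badCount x T c = 2 β_T` counts the oriented non-tree edges whose fundamental
cycle has nonzero `x`-flux, so the identity reads `badCount x T c = #supp m`. -/
theorem minTree_badCount_eq_suppCard {V A : Type} [Fintype V] [Fintype A] {d : ℕ}
    (G : OGraph V A) (hG : G.Connected)
    (x : A → Fin d → ℝ) (hx : G.IsOneForm x)
    (m : A → Fin d → ℝ) (hm : G.InF x m)
    (hmin : ∀ b : A → Fin d → ℝ, G.InF x b → OGraph.suppCard m ≤ OGraph.suppCard b)
    (T : Set A) (c : A → List A)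
    (hT : G.IsMinTree x T) (hc : ∀ e, e ∉ T → G.FundCycle T e (c e)) :
    OGraph.badCount x T c = OGraph.suppCard m := by
  classical
  obtain ⟨hTtree, c₀, hc₀, hminT⟩ := hT
  obtain ⟨hrevT, hconnT, hacycT⟩ := hTtree
  have hacyc : G.NoCyc T := hacycT
  -- the orientation set S
  let enc := Fintype.equivFin A
  let S : Set A := {e | e ∉ T ∧ enc e < enc (G.rev e)}
  have hS1 : ∀ e ∈ S, e ∉ T := fun e he => he.1
  have hS2 : ∀ e, e ∉ T → (e ∈ S ↔ G.rev e ∉ S) := by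
    intro e heT
    constructor
    · rintro ⟨-, hlt⟩ ⟨-, hlt'⟩
      rw [G.rev_rev] at hlt'
      exact absurd hlt' (not_lt_of_gt hlt)
    · intro hns
      refine ⟨heT, ?_⟩
      have hne : enc e ≠ enc (G.rev e) := fun h => G.rev_ne e (enc.injective h.symm)
      rcases lt_or_gt_of_ne hne with h | h
      · exact h
      · exfalso
        refine hns ⟨?_, ?_⟩
        · intro hrT; exact heT (by rw [← G.rev_rev e]; exact hrevT _ hrT)
        · rw [G.rev_rev]; exact h
  -- Step 1: suppCard m ≤ badCount x T c₀, via the form mForm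
  have hinF := G.mform_inF hrevT hacyc hx hc₀ hS1 hS2
  have hsuppEq := G.mform_supp hrevT hacyc hx hc₀ hS1 hS2
  have hstep1 : OGraph.suppCard m ≤ OGraph.badCount x T c₀ := by
    rw [← hsuppEq]; exact hmin _ hinF
  -- badCount is independent of the choice of fundamental cycles
  have hbc : OGraph.badCount x T c = OGraph.badCount x T c₀ := by
    unfold OGraph.badCount
    congr 1
    ext e
    by_cases heT : e ∈ T
    · simp [heT]
    · have hu := G.fund_flux_unique hrevT hacyc hx (hc e heT) (hc₀ e heT)
      simp [heT, hu]
  -- Step 2: a spanning tree adapted to the support of m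
  obtain ⟨T', hST', hgood⟩ := G.exists_good_tree hG (D := {e | m e = 0})
    (by intro e he
        simp only [Set.mem_setOf_eq] at he ⊢
        rw [hm.1 e, he]; simp)
  obtain ⟨hrevT', hconnT', hacycT'⟩ := hST'
  have hex : ∀ e, e ∉ T' → ∃ cyc, G.FundCycle T' e cyc ∧ ((cyc.map x).sum ≠ 0 → m e ≠ 0) := by
    intro e heT'
    by_cases hme : m e = 0
    · obtain ⟨l, hl, hw⟩ := hgood e hme heT'
      obtain ⟨cyc, hcyc, hmem⟩ := G.fundcycle_of_walk hrevT' heT'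
        (E := T' ∩ {f | m f = 0}) Set.inter_subset_left
        (fun f hf => ⟨(hl f hf).1, (hl f hf).2⟩) hw
      refine ⟨cyc, hcyc, ?_⟩
      intro hsum
      exfalso
      apply hsum
      obtain ⟨⟨u0, hct⟩, -, -⟩ := hcyc
      rw [← hm.2 u0 cyc hct.1]
      apply List.sum_eq_zero
      intro z hz
      rw [List.mem_map] at hz
      obtain ⟨f, hf, rfl⟩ := hz
      rcases hmem f hf with rfl | hfE
      · exact hme
      · exact hfE.2
    · obtain ⟨l, hl, hw⟩ := hconnT' (G.tail e) (G.head e)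
      obtain ⟨cyc, hcyc, -⟩ := G.fundcycle_of_walk hrevT' heT' (E := T')
        (fun f hf => hf) hl hw
      exact ⟨cyc, hcyc, fun _ => hme⟩
  choose! c' hc'1 hc'2 using hex
  have hstep3 : OGraph.badCount x T' c' ≤ OGraph.suppCard m := by
    unfold OGraph.badCount OGraph.suppCard
    apply Finset.card_le_card
    intro e he
    simp only [Finset.mem_filter, Finset.mem_univ, true_and] at he ⊢
    exact hc'2 e he.1 he.2
  have hstep2 : OGraph.badCount x T c₀ ≤ OGraph.badCount x T' c' :=
    hminT T' c' ⟨hrevT', hconnT', hacycT'⟩ hc'1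
  rw [hbc]
  omega
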